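/- For each fixed ε > 0, the function on compact metric measure spaces sending (X, d_X, ν_X) to ρ_ε^X := inf_{x ∈ X} ν_X(C_ε(x)) is upper semi-continuous with respect to the Gromov–Hausdorff–Prokhorov metric, where C_ε(x) is the closed ε-ball around x. -/

import Mathlib

open MeasureTheory Metric Set Filter

/-- A sequence of compact metric probability spaces converges to a limit space in the
Gromov–Hausdorff–Prokhorov sense if, for every `ε > 0`, eventually the spaces can be
isometrically embedded into a common metric space with Hausdorff distance of the images
and Prokhorov distance of the pushforward measures both `< ε`. -/
def GHPTendsto (X : ℕ → Type) [∀ n, MetricSpace (X n)]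
    [∀ n, MeasurableSpace (X n)] [∀ n, BorelSpace (X n)]
    (μ : ∀ n, Measure (X n))
    (Y : Type) [MetricSpace Y] [MeasurableSpace Y] [BorelSpace Y]
    (ν : Measure Y) : Prop :=
  ∀ ε : ℝ, 0 < ε → ∀ᶠ n in atTop,
    ∃ (Z : Type) (_ : MetricSpace Z) (_ : MeasurableSpace Z) (_ : BorelSpace Z)
      (φ : X n → Z) (ψ : Y → Z), Isometry φ ∧ Isometry ψ ∧
      hausdorffDist (Set.range φ) (Set.range ψ) < ε ∧
      levyProkhorovDist ((μ n).map φ) (ν.map ψ) < ε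

/-- Upper semi-continuity of `ρ_ε` with respect to GHP convergence (sequential form):
along any GHP-convergent sequence, the `limsup` of the `ρ_ε` of the approximating
spaces is at most `ρ_ε` of the limit. -/
theorem rho_upperSemicontinuous_GHP
    (ε : ℝ) (hε : 0 < ε)
    (X : ℕ → Type) [∀ n, MetricSpace (X n)] [∀ n, CompactSpace (X n)]
    [∀ n, MeasurableSpace (X n)] [∀ n, BorelSpace (X n)]
    (μ : ∀ n, Measure (X n)) [∀ n, IsProbabilityMeasure (μ n)]
    (Y : Type) [MetricSpace Y] [CompactSpace Y] [MeasurableSpace Y] [BorelSpace Y]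
    (ν : Measure Y) [IsProbabilityMeasure ν]
    (hconv : GHPTendsto X μ Y ν) :
    Filter.limsup (fun n => ⨅ x : X n, μ n (Metric.closedBall x ε)) atTop ≤
      ⨅ y : Y, ν (Metric.closedBall y ε) := by
  have hXne : ∀ n, Nonempty (X n) := fun n => by
    by_contra h
    rw [not_nonempty_iff] at h
    have : (μ n) Set.univ = 1 := measure_univ
    rw [Set.univ_eq_empty_iff.mpr h] at this
    simp at this
  refine le_iInf fun y => ?_
  -- Main step: for every δ > 0, limsup ≤ ν (closedBall y (ε + δ)).
  have key : ∀ δ : ℝ, 0 < δ →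
      Filter.limsup (fun n => ⨅ x : X n, μ n (Metric.closedBall x ε)) atTop ≤
        ν (Metric.closedBall y (ε + δ)) := by
    intro δ hδ
    refine ENNReal.le_of_forall_pos_le_add fun η' hη' hfin => ?_
    set η : ℝ := min ((η' : ℝ) / 2) (δ / 4) with hη_def
    have hη_pos : 0 < η := lt_min (by positivity) (by positivity)
    have hη_le : ENNReal.ofReal η ≤ (η' : ENNReal) := by
      rw [← ENNReal.ofReal_coe_nnreal]
      exact ENNReal.ofReal_le_ofReal ((min_le_left _ _).trans (by linarith [η'.coe_nonneg]))
    have hev := hconv η hη_pos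
    refine Filter.limsup_le_of_le (by isBoundedDefault) ?_
    filter_upwards [hev] with n hn
    obtain ⟨Z, _, _, _, φ, ψ, hφ, hψ, hH, hP⟩ := hn
    have hφm : Measurable φ := hφ.continuous.measurable
    have hψm : Measurable ψ := hψ.continuous.measurable
    have : IsProbabilityMeasure ((μ n).map φ) := Measure.isProbabilityMeasure_map hφm.aemeasurable
    have : IsProbabilityMeasure (ν.map ψ) := Measure.isProbabilityMeasure_map hψm.aemeasurable
    -- find x with dist (φ x) (ψ y) < η
    have hrφ : (Set.range φ).Nonempty := Set.range_nonempty _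
    have hrψ : (Set.range ψ).Nonempty := ⟨ψ y, mem_range_self y⟩
    have hedist : EMetric.hausdorffEdist (Set.range ψ) (Set.range φ) ≠ ⊤ := by
      apply Metric.hausdorffEdist_ne_top_of_nonempty_of_bounded hrψ hrφ
      · exact (isCompact_range hψ.continuous).isBounded
      · exact (isCompact_range hφ.continuous).isBounded
    have hinf : Metric.infDist (ψ y) (Set.range φ) < η := by
      calc Metric.infDist (ψ y) (Set.range φ)
          ≤ hausdorffDist (Set.range ψ) (Set.range φ) :=
            Metric.infDist_le_hausdorffDist_of_mem (mem_range_self y) hedist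
        _ = hausdorffDist (Set.range φ) (Set.range ψ) := Metric.hausdorffDist_comm
        _ < η := hH
    obtain ⟨z, ⟨x, rfl⟩, hxz⟩ := (Metric.infDist_lt_iff hrφ).mp hinf
    -- Prokhorov bound
    have hPE : levyProkhorovEDist ((μ n).map φ) (ν.map ψ) < ENNReal.ofReal η := by
      rw [ENNReal.lt_ofReal_iff_toReal_lt (levyProkhorovEDist_ne_top _ _)]
      exact hP
    have hball_mble : MeasurableSet (Metric.closedBall (φ x) ε) :=
      measurableSet_closedBall
    have hbound := left_measure_le_of_levyProkhorovEDist_lt hPE hball_mble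
    rw [ENNReal.toReal_ofReal hη_pos.le] at hbound
    -- identify the measures of balls
    have hμball : μ n (Metric.closedBall x ε) = ((μ n).map φ) (Metric.closedBall (φ x) ε) := by
      rw [Measure.map_apply hφm hball_mble]
      congr 1
      ext a
      simp [Metric.mem_closedBall, hφ.dist_eq]
    have hνball : (ν.map ψ) (Metric.closedBall (ψ y) (ε + δ)) =
        ν (Metric.closedBall y (ε + δ)) := by
      rw [Measure.map_apply hψm measurableSet_closedBall]
      congr 1
      ext a
      simp [Metric.mem_closedBall, hψ.dist_eq]
    -- thickening inclusion
    have hsub : Metric.thickening η (Metric.closedBall (φ x) ε) ⊆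
        Metric.closedBall (ψ y) (ε + δ) := by
      intro z hz
      obtain ⟨w, hw, hzw⟩ := Metric.mem_thickening_iff.mp hz
      have hw' : dist w (φ x) ≤ ε := hw
      have h1 : dist (φ x) (ψ y) < η := by rwa [dist_comm]
      have h2 : η ≤ δ / 4 := min_le_right _ _
      calc dist z (ψ y) ≤ dist z w + dist w (φ x) + dist (φ x) (ψ y) :=
            dist_triangle4 z w (φ x) (ψ y)
        _ ≤ η + ε + η := by linarith [hzw.le]
        _ ≤ ε + δ := by linarith
    calc (⨅ x' : X n, μ n (Metric.closedBall x' ε))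
        ≤ μ n (Metric.closedBall x ε) := iInf_le _ x
      _ = ((μ n).map φ) (Metric.closedBall (φ x) ε) := hμball
      _ ≤ (ν.map ψ) (Metric.thickening η (Metric.closedBall (φ x) ε)) + ENNReal.ofReal η :=
          hbound
      _ ≤ (ν.map ψ) (Metric.closedBall (ψ y) (ε + δ)) + ENNReal.ofReal η :=
          add_le_add (measure_mono hsub) le_rfl
      _ = ν (Metric.closedBall y (ε + δ)) + ENNReal.ofReal η := by rw [hνball]
      _ ≤ ν (Metric.closedBall y (ε + δ)) + η' := add_le_add le_rfl hη_le
  -- Pass to the limit δ → 0 along δ = 1/(k+1).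
  have hiInter : (⋂ k : ℕ, Metric.closedBall y (ε + 1 / (k + 1))) =
      Metric.closedBall y ε := by
    ext z
    simp only [Set.mem_iInter, Metric.mem_closedBall]
    constructor
    · intro h
      by_contra hlt
      push_neg at hlt
      obtain ⟨k, hk⟩ := exists_nat_one_div_lt (sub_pos.mpr hlt)
      have := h k
      linarith
    · intro h k
      have : (0:ℝ) < 1 / (k + 1) := by positivity
      linarith
  have htend : Tendsto (fun k : ℕ => ν (Metric.closedBall y (ε + 1 / (k + 1)))) atTop
      (nhds (ν (Metric.closedBall y ε))) := by
    have := tendsto_measure_iInter_atTop (μ := ν)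
      (s := fun k : ℕ => Metric.closedBall y (ε + 1 / (k + 1)))
      (fun k => measurableSet_closedBall.nullMeasurableSet)
      (fun i j hij => Metric.closedBall_subset_closedBall (by
        have : (1:ℝ) / (j + 1) ≤ 1 / (i + 1) := by
          apply one_div_le_one_div_of_le (by positivity)
          exact_mod_cast by omega
        linarith))
      ⟨0, measure_ne_top ν _⟩
    rwa [hiInter] at this
  refine ge_of_tendsto htend (Filter.Eventually.of_forall fun k => ?_)
  exact key (1 / (k + 1)) (by positivity)
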